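/- Let U ∈ ℚ[[z]] be the formal power series U = ∑_{n ≥ 1} (1/n)·binomial(3n-2, n-1)·(1/2^{3n-1})·zⁿ. Then U·(U - 2)² = z as formal power series, i.e., U is the compositional solution of z = u(u-2)² with U(0) = 0. -/

import Mathlib

open PowerSeries Finset


private def vv : ℕ → ℚ
  | 0 => 0
  | 1 => 1/4
  | n+2 =>
    (∑ i ∈ (range (n+1)).attach, vv (i.1+1) * vv (n+1-i.1))
    - (1/4) * ∑ i ∈ (range (n+1)).attach, vv (i.1+1) *
        (∑ j ∈ (range (n-i.1)).attach, vv (j.1+1) * vv (n-i.1-j.1))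
decreasing_by
  all_goals first
    | (have h1 := Finset.mem_range.mp i.2; have h2 := Finset.mem_range.mp j.2; omega)
    | (have h1 := Finset.mem_range.mp i.2; omega)

private lemma vv_succ_succ (n : ℕ) : vv (n+2) =
    (∑ i ∈ range (n+1), vv (i+1) * vv (n+1-i))
    - (1/4) * ∑ i ∈ range (n+1), vv (i+1) *
        (∑ j ∈ range (n-i), vv (j+1) * vv (n-i-j)) := by
  rw [vv]
  congr 1
  · exact Finset.sum_attach (range (n+1)) (fun k => vv (k+1) * vv (n+1-k))
  · congr 1
    rw [← Finset.sum_attach (range (n+1)) (fun k => vv (k+1) * ∑ j ∈ range (n-k), vv (j+1) * vv (n-k-j))]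
    exact Finset.sum_congr rfl (fun i _ => by
      congr 1
      exact Finset.sum_attach (range (n - i.1)) (fun k => vv (k+1) * vv (n-i.1-k)))


private noncomputable def VV : PowerSeries ℚ := PowerSeries.mk vv

private lemma vv0 : vv 0 = 0 := by simp [vv]
private lemma vv1 : vv 1 = 1/4 := by simp [vv]

private lemma coeff_VV (n : ℕ) : coeff n VV = vv n := coeff_mk n vv

private lemma sq_coeff (n : ℕ) : coeff (n+1) (VV * VV) =
    ∑ i ∈ range n, vv (i+1) * vv (n-i) := by
  rw [coeff_mul]
  rw [Finset.Nat.sum_antidiagonal_eq_sum_range_succ_mk]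
  simp only [coeff_VV]
  rw [Finset.sum_range_succ' (fun k => vv k * vv (n+1-k)) (n+1)]
  simp only [vv0, zero_mul, add_zero, Nat.succ_sub_succ]
  rw [Finset.sum_range_succ]
  simp [vv0]

private lemma cube_coeff (n : ℕ) : coeff (n+2) (VV * (VV * VV)) =
    ∑ i ∈ range (n+1), vv (i+1) * (∑ j ∈ range (n-i), vv (j+1) * vv (n-i-j)) := by
  rw [coeff_mul]
  rw [Finset.Nat.sum_antidiagonal_eq_sum_range_succ_mk]
  simp only [coeff_VV]
  rw [Finset.sum_range_succ' (fun k => vv k * coeff (n+2-k) (VV*VV)) (n+2)]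
  simp only [vv0, zero_mul, add_zero, Nat.succ_sub_succ]
  rw [Finset.sum_range_succ]
  have h0 : coeff 0 (VV * VV) = 0 := by
    rw [coeff_zero_eq_constantCoeff, map_mul]
    simp [VV, vv0]
  rw [show n+1-(n+1) = 0 by omega, h0, mul_zero, add_zero]
  refine Finset.sum_congr rfl (fun i hi => ?_)
  have hi' := Finset.mem_range.mp hi
  rw [show n+1-i = (n-i)+1 by omega, sq_coeff]
private lemma VV_cubic' : VV * (VV * VV) - PowerSeries.C 4 * (VV * VV) + PowerSeries.C 4 * VV = PowerSeries.X := by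
  ext n
  simp only [map_sub, map_add, coeff_C_mul, coeff_VV, coeff_X]
  match n with
  | 0 =>
    have h0 : coeff 0 (VV * VV) = 0 := by
      rw [coeff_zero_eq_constantCoeff, map_mul]; simp [VV, vv0]
    have h0' : coeff 0 (VV * (VV * VV)) = 0 := by
      rw [coeff_zero_eq_constantCoeff, map_mul]; simp [VV, vv0]
    simp [h0, h0', vv0]
  | 1 =>
    have h1 : coeff 1 (VV * VV) = 0 := by
      rw [sq_coeff 0]; simp
    have h1' : coeff 1 (VV * (VV * VV)) = 0 := by
      rw [coeff_mul, Finset.Nat.sum_antidiagonal_eq_sum_range_succ_mk]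
      have h0 : coeff 0 (VV * VV) = 0 := by
        rw [coeff_zero_eq_constantCoeff, map_mul]; simp [VV, vv0]
      simp [Finset.sum_range_succ, coeff_VV, vv0, h0, h1]
    rw [h1, h1']
    norm_num [vv1]
  | (n+2) =>
    rw [sq_coeff (n+1), cube_coeff n, vv_succ_succ n]
    simp only [if_neg (by omega : ¬ n+2 = 1)]
    ring
private lemma c_eq (a : ℕ) [a.AtLeastTwo] : (PowerSeries.C (OfNat.ofNat a) : PowerSeries ℚ) = OfNat.ofNat a :=
  map_ofNat _ a

private noncomputable def D1 : PowerSeries ℚ := PowerSeries.derivative ℚ VV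
private noncomputable def D2 : PowerSeries ℚ := PowerSeries.derivative ℚ D1

private lemma VV_cubic : VV * (VV - 2)^2 = PowerSeries.X := by
  have h := VV_cubic'
  rw [c_eq 4] at h
  linear_combination h

private lemma hd1 : (3*(VV*VV) - 8*VV + 4) * D1 = 1 := by
  have h := congrArg (PowerSeries.derivative ℚ) VV_cubic'
  simp only [map_sub, map_add, Derivation.leibniz, derivative_C, derivative_X,
    smul_eq_mul, smul_zero, mul_zero, add_zero, zero_add] at h
  rw [c_eq 4] at h
  show _ * PowerSeries.derivative ℚ VV = 1
  linear_combination h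

private lemma hd1C : (PowerSeries.C 3*(VV*VV) - PowerSeries.C 8*VV + PowerSeries.C 4) * D1 = 1 := by
  rw [c_eq 3, c_eq 8, c_eq 4]; exact hd1

private lemma hd2 : (3*(VV*VV) - 8*VV + 4) * D2 = -((6*VV - 8) * D1 * D1) := by
  have h := congrArg (PowerSeries.derivative ℚ) hd1C
  simp only [Derivation.map_one_eq_zero, Derivation.leibniz, map_sub, map_add, derivative_C,
    smul_eq_mul, smul_zero, mul_zero, add_zero, zero_add, sub_zero] at h
  rw [c_eq 3, c_eq 8, c_eq 4] at h
  show _ * PowerSeries.derivative ℚ D1 = _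
  unfold D1 at h ⊢
  linear_combination h
private lemma odeV :
    32*(PowerSeries.X*D2) - 27*(PowerSeries.X^2*D2) + 16*D1 - 27*(PowerSeries.X*D1) + 3*VV
      = 4 := by
  set X : PowerSeries ℚ := PowerSeries.X with hX
  set V : PowerSeries ℚ := VV with hV
  have hcube : V^3 - 4*V^2 + 4*V = X := by
    have := VV_cubic; rw [← hV, ← hX] at this; linear_combination this
  have h1 : (3*V^2 - 8*V + 4) * D1 = 1 := by
    have := hd1; rw [← hV] at this; linear_combination this
  have h2 : (3*V^2 - 8*V + 4) * D2 = -((6*V - 8) * D1 * D1) := by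
    have := hd2; rw [← hV] at this; linear_combination this
  have e1 : (3*V^2 - 8*V + 4)^3 * D2 = -(6*V - 8) := by
    linear_combination (3*V^2 - 8*V + 4)^2 * h2
      - (6*V-8) * ((3*V^2 - 8*V + 4)*D1 + 1) * h1
  have e2 : (3*V^2 - 8*V + 4)^3 * D1 = (3*V^2 - 8*V + 4)^2 := by
    linear_combination (3*V^2 - 8*V + 4)^2 * h1
  have key : (3*V^2 - 8*V + 4)^3 *
      ((32*X - 27*X^2)*D2 + (16 - 27*X)*D1 + 3*V - 4) = 0 := by
    linear_combination (32*X - 27*X^2) * e1 + (16 - 27*X) * e2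
      + (81*V^4 - 432*V^3 + 864*V^2 - 672*V + 176 + 216*X - 162*V*X) * hcube
  have hE : (32*X - 27*X^2)*D2 + (16 - 27*X)*D1 + 3*V - 4 = 0 := by
    have expand : (32*X - 27*X^2)*D2 + (16 - 27*X)*D1 + 3*V - 4
        = D1^3 * ((3*V^2 - 8*V + 4)^3 *
            ((32*X - 27*X^2)*D2 + (16 - 27*X)*D1 + 3*V - 4))
          + (1 - ((3*V^2 - 8*V + 4)*D1)^3) *
            ((32*X - 27*X^2)*D2 + (16 - 27*X)*D1 + 3*V - 4) := by ring
    rw [expand, key, h1]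
    ring
  linear_combination hE
private lemma coeff_D1 (n : ℕ) : coeff n D1 = vv (n+1) * (n+1) := by
  rw [D1, PowerSeries.coeff_derivative, coeff_VV]

private lemma coeff_D2 (n : ℕ) : coeff n D2 = vv (n+2) * (n+2) * (n+1) := by
  rw [D2, PowerSeries.coeff_derivative, coeff_D1]
  push_cast
  ring

private lemma odeV_C :
    PowerSeries.C 32*(PowerSeries.X*D2) - PowerSeries.C 27*(PowerSeries.X^2*D2)
      + PowerSeries.C 16*D1 - PowerSeries.C 27*(PowerSeries.X*D1)
      + PowerSeries.C 3*VV = PowerSeries.C 4 := by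
  rw [c_eq 32, c_eq 27, c_eq 16, c_eq 3, c_eq 4]; exact odeV

private lemma ode_coeff (m : ℕ) :
    32 * coeff m (PowerSeries.X*D2) - 27 * coeff m (PowerSeries.X^2*D2)
      + 16 * coeff m D1 - 27 * coeff m (PowerSeries.X*D1) + 3 * vv m
      = if m = 0 then 4 else 0 := by
  have h := congrArg (coeff m) odeV_C
  simpa only [map_sub, map_add, coeff_C_mul, coeff_VV, coeff_C] using h

private lemma recV0 : 16 * vv 1 = 4 := by
  have h := ode_coeff 0
  have e0 : ∀ f : PowerSeries ℚ, coeff 0 (PowerSeries.X * f) = 0 := fun f => by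
    rw [coeff_zero_eq_constantCoeff, map_mul]; simp
  have e0' : coeff 0 (PowerSeries.X^2 * D2) = 0 := by
    rw [coeff_zero_eq_constantCoeff, map_mul]; simp
  rw [e0, e0, e0', coeff_D1, vv0] at h
  push_cast at h
  linarith

private lemma recV (m : ℕ) :
    16*((m:ℚ)+2)*(2*m+3) * vv (m+2) = (27*((m:ℚ)+1)^2 - 3) * vv (m+1) := by
  have h := ode_coeff (m+1)
  rw [coeff_succ_X_mul, coeff_succ_X_mul] at h
  simp only [coeff_D1, coeff_D2] at h
  have hx2 : coeff (m+1) (PowerSeries.X^2*D2) = vv (m+1) * (m+1) * m := by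
    match m with
    | 0 =>
      rw [show (0:ℕ)+1 = 0+1 from rfl]
      rw [PowerSeries.coeff_X_pow_mul']
      norm_num
    | (k+1) =>
      rw [show k+1+1 = k+2 from rfl, PowerSeries.coeff_X_pow_mul, coeff_D2]
      push_cast
      ring
  rw [hx2] at h
  simp only [if_neg (Nat.succ_ne_zero m)] at h
  push_cast at h
  linear_combination h
private noncomputable def ww (n : ℕ) : ℚ :=
  if n = 0 then 0 else
    (1 / (n : ℚ)) * (Nat.choose (3 * n - 2) (n - 1) : ℚ) * (1 / 2 ^ (3 * n - 1))

private lemma recW (m : ℕ) :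
    16*((m:ℚ)+2)*(2*m+3) * ww (m+2) = (27*((m:ℚ)+1)^2 - 3) * ww (m+1) := by
  have hb1 : (((3*m+4).choose (m+1)) : ℚ) = ((3*m+4).factorial : ℚ) / (((m+1).factorial : ℚ) * ((2*m+3).factorial : ℚ)) := by
    rw [Nat.cast_choose ℚ (by omega : m+1 ≤ 3*m+4), show 3*m+4-(m+1) = 2*m+3 by omega]
  have hb2 : (((3*m+1).choose m) : ℚ) = ((3*m+1).factorial : ℚ) / ((m.factorial : ℚ) * ((2*m+1).factorial : ℚ)) := by
    rw [Nat.cast_choose ℚ (by omega : m ≤ 3*m+1), show 3*m+1-m = 2*m+1 by omega]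
  have f1 : ((3*m+4).factorial : ℚ) = (3*(m:ℚ)+4)*(3*m+3)*(3*m+2)*((3*m+1).factorial : ℚ) := by
    rw [show 3*m+4 = (3*m+3)+1 by omega, Nat.factorial_succ,
      show 3*m+3 = (3*m+2)+1 by omega, Nat.factorial_succ,
      show 3*m+2 = (3*m+1)+1 by omega, Nat.factorial_succ]
    push_cast; ring
  have f2 : ((m+1).factorial : ℚ) = ((m:ℚ)+1)*(m.factorial : ℚ) := by
    rw [Nat.factorial_succ]; push_cast; ring
  have f3 : ((2*m+3).factorial : ℚ) = (2*(m:ℚ)+3)*(2*m+2)*((2*m+1).factorial : ℚ) := by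
    rw [show 2*m+3 = (2*m+2)+1 by omega, Nat.factorial_succ,
      show 2*m+2 = (2*m+1)+1 by omega, Nat.factorial_succ]
    push_cast; ring
  simp only [ww, if_neg (by omega : ¬ m+2 = 0), if_neg (by omega : ¬ m+1 = 0)]
  rw [show 3*(m+2)-2 = 3*m+4 by omega, show (m+2)-1 = m+1 by omega,
    show 3*(m+2)-1 = 3*m+5 by omega, show 3*(m+1)-2 = 3*m+1 by omega,
    show (m+1)-1 = m by omega, show 3*(m+1)-1 = 3*m+2 by omega]
  rw [hb1, hb2, f1, f2, f3, show 3*m+5 = (3*m+2)+3 by omega, pow_add]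
  have n1 : ((m:ℚ)+1) ≠ 0 := by positivity
  have n2 : ((m:ℚ)+2) ≠ 0 := by positivity
  have n3 : (m.factorial : ℚ) ≠ 0 := Nat.cast_ne_zero.2 (Nat.factorial_ne_zero m)
  have n4 : ((3*m+1).factorial : ℚ) ≠ 0 := Nat.cast_ne_zero.2 (Nat.factorial_ne_zero _)
  have n5 : ((2*m+1).factorial : ℚ) ≠ 0 := Nat.cast_ne_zero.2 (Nat.factorial_ne_zero _)
  have n6 : (2:ℚ) ^ (3*m+2) ≠ 0 := by positivity
  push_cast
  field_simp
  ring

private lemma w_eq_vv : ∀ n, ww n = vv n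
  | 0 => by simp [ww, vv0]
  | 1 => by norm_num [ww, vv1]
  | (m+2) => by
    have h1 := recW m
    have h2 := recV m
    have h3 : ww (m+1) = vv (m+1) := w_eq_vv (m+1)
    have hne : (16*((m:ℚ)+2)*(2*(m:ℚ)+3)) ≠ 0 := by positivity
    refine mul_left_cancel₀ hne ?_
    rw [h1, h3, h2]

theorem lagrange_inversion_series_satisfies_equation :
    (PowerSeries.mk (fun n : ℕ => if n = 0 then 0 else
        (1 / (n : ℚ)) * (Nat.choose (3 * n - 2) (n - 1) : ℚ) *
          (1 / 2 ^ (3 * n - 1))) : PowerSeries ℚ) *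
      ((PowerSeries.mk (fun n : ℕ => if n = 0 then 0 else
        (1 / (n : ℚ)) * (Nat.choose (3 * n - 2) (n - 1) : ℚ) *
          (1 / 2 ^ (3 * n - 1))) : PowerSeries ℚ) - 2) ^ 2 = PowerSeries.X := by
  have hW : (PowerSeries.mk ww : PowerSeries ℚ) = VV := by
    ext n
    rw [coeff_mk, coeff_VV]
    exact w_eq_vv n
  show PowerSeries.mk ww * (PowerSeries.mk ww - 2) ^ 2 = PowerSeries.X
  rw [hW]
  exact VV_cubic
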